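/- Let γ, σ, ξ be real numbers with 0 < γ < 1, σ > 0 and ξ > 0. Then −π/2 < arg( Γ(σ+iξ) · Γ(γ) / Γ(σ+γ+iξ) ) < 0, where arg denotes the principal argument with values in (−π, π]. -/

import Mathlib

open Complex Real Filter Set

private lemma arg_eq_arctan' {z : ℂ} (hz : 0 < z.re) :
    z.arg = Real.arctan (z.im / z.re) := by
  have h := Complex.abs_arg_lt_pi_div_two_iff.2 (Or.inl hz)
  rw [abs_lt] at h
  rw [← Complex.tan_arg, Real.arctan_tan h.1 h.2]

private lemma arg_vert {ξ x : ℝ} (hξ : 0 < ξ) (hx : 0 < x) :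
    ((x : ℂ) + (ξ : ℂ) * Complex.I).arg = Real.arctan (ξ / x) := by
  have hre : ((x : ℂ) + (ξ : ℂ) * Complex.I).re = x := by simp
  have him : ((x : ℂ) + (ξ : ℂ) * Complex.I).im = ξ := by simp
  rw [arg_eq_arctan' (by rw [hre]; exact hx), hre, him]

private lemma arctan_pos' {t : ℝ} (ht : 0 < t) : 0 < Real.arctan t := by
  have := Real.arctan_strictMono ht
  rwa [Real.arctan_zero] at this

private lemma arg_quot {ξ x x' : ℝ} (hξ : 0 < ξ) (hx : 0 < x) (hxx' : x < x') :
    (((x' : ℂ) + (ξ : ℂ) * Complex.I) / ((x : ℂ) + (ξ : ℂ) * Complex.I)).arg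
      = Real.arctan (ξ / x') - Real.arctan (ξ / x) := by
  have hx' : (0:ℝ) < x' := hx.trans hxx'
  set zx : ℂ := (x : ℂ) + (ξ : ℂ) * Complex.I with hzxdef
  set zx' : ℂ := (x' : ℂ) + (ξ : ℂ) * Complex.I with hzx'def
  have hzxre : zx.re = x := by simp [hzxdef]
  have hzxim : zx.im = ξ := by simp [hzxdef]
  have hzx're : zx'.re = x' := by simp [hzx'def]
  have hzx'im : zx'.im = ξ := by simp [hzx'def]
  have hzx0 : zx ≠ 0 := fun h => by rw [h] at hzxre; simp at hzxre; linarith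
  have hzx'0 : zx' ≠ 0 := fun h => by rw [h] at hzx're; simp at hzx're; linarith
  have hN : 0 < Complex.normSq zx := Complex.normSq_pos.2 hzx0
  set w : ℂ := zx' / zx with hwdef
  have hw0 : w ≠ 0 := div_ne_zero hzx'0 hzx0
  have hwre : 0 < w.re := by
    rw [hwdef, Complex.div_re, hzxre, hzxim, hzx're, hzx'im]
    positivity
  have hwim : w.im < 0 := by
    rw [hwdef, Complex.div_im, hzxre, hzxim, hzx're, hzx'im]
    have : ξ * x - x' * ξ < 0 := by nlinarith
    have h2 : ξ * x / Complex.normSq zx - x' * ξ / Complex.normSq zx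
        = (ξ * x - x' * ξ) / Complex.normSq zx := by ring
    rw [h2]
    exact div_neg_of_neg_of_pos this hN
  have hargw_neg : w.arg < 0 := Complex.arg_neg_iff.2 hwim
  have hargw_gt : -(π / 2) < w.arg := (abs_lt.1 (Complex.abs_arg_lt_pi_div_two_iff.2 (Or.inl hwre))).1
  have hargzx : zx.arg = Real.arctan (ξ / x) := arg_vert hξ hx
  have hargzx_pos : 0 < zx.arg := by rw [hargzx]; exact arctan_pos' (by positivity)
  have hargzx_lt : zx.arg < π / 2 := by rw [hargzx]; exact Real.arctan_lt_pi_div_two _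
  have hmul : zx * w = zx' := by
    rw [hwdef]; field_simp
  have hmem : zx.arg + w.arg ∈ Set.Ioc (-π) π := by
    constructor
    · have := Real.pi_pos; linarith
    · have := Real.pi_pos; linarith
  have h := Complex.arg_mul hzx0 hw0 hmem
  rw [hmul] at h
  have h2 : (((x' : ℂ) + (ξ : ℂ) * Complex.I)).arg = Real.arctan (ξ / x') :=
    arg_vert hξ hx'
  rw [show zx'.arg = Real.arctan (ξ / x') from h2, hargzx] at h
  show w.arg = _
  linarith

private lemma re_pos_im_neg_quot (γ σ ξ : ℝ) (hγ : 0 < γ) (hγ' : γ < 1) (hσ : 0 < σ)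
    (hξ : 0 < ξ) :
    0 < (Complex.Gamma ((σ : ℂ) + (ξ : ℂ) * Complex.I) /
          Complex.Gamma (((σ + γ : ℝ) : ℂ) + (ξ : ℂ) * Complex.I)).re ∧
      (Complex.Gamma ((σ : ℂ) + (ξ : ℂ) * Complex.I) /
          Complex.Gamma (((σ + γ : ℝ) : ℂ) + (ξ : ℂ) * Complex.I)).im < 0 := by
  have hπ := Real.pi_pos
  set z : ℝ → ℂ := fun x => (x : ℂ) + (ξ : ℂ) * Complex.I with hzdef
  have hzre : ∀ x : ℝ, (z x).re = x := by intro x; simp [hzdef]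
  have hz0 : ∀ x : ℝ, 0 < x → z x ≠ 0 := by
    intro x hx h
    have := congrArg Complex.re h
    rw [hzre] at this
    simp at this; linarith
  clear_value z
  set A := Real.arctan (ξ / σ) with hAdef
  set d := A - Real.arctan (ξ / (σ + γ)) with hddef
  clear_value A d
  have hmono : ∀ u v : ℝ, u ≤ v → Real.arctan u ≤ Real.arctan v :=
    fun u v h => Real.arctan_strictMono.monotone h
  have hApos : 0 < A := by rw [hAdef]; exact arctan_pos' (by positivity)
  have hAlt : A < π / 2 := by rw [hAdef]; exact Real.arctan_lt_pi_div_two _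
  have hd_pos : 0 < d := by
    have h1 : Real.arctan (ξ / (σ + γ)) < Real.arctan (ξ / σ) :=
      Real.arctan_strictMono (div_lt_div_of_pos_left hξ hσ (by linarith))
    rw [hddef, hAdef]; linarith
  have hdA : d < A := by
    have h1 : 0 < Real.arctan (ξ / (σ + γ)) := arctan_pos' (by positivity)
    rw [hddef]; linarith
  -- the partial products
  set P : ℕ → ℂ := fun n => ∏ j ∈ Finset.range (n + 1), (z (σ + γ + j) / z (σ + j)) with hPdef
  clear_value P
  have hP0 : ∀ n, P n ≠ 0 := by
    intro n
    simp only [hPdef]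
    refine Finset.prod_ne_zero_iff.2 fun j _ => div_ne_zero ?_ ?_
    · exact hz0 _ (by positivity)
    · exact hz0 _ (by positivity)
  have main : ∀ n : ℕ,
      -(A - Real.arctan (ξ / (σ + n + 1))) ≤ (P n).arg ∧ (P n).arg ≤ -d := by
    intro n
    induction n with
    | zero =>
      have hbase : P 0 = z (σ + γ) / z σ := by
        simp only [hPdef]
        rw [Finset.prod_range_one]
        norm_num
      have harg : (P 0).arg = Real.arctan (ξ / (σ + γ)) - A := by
        rw [hbase]; simp only [hzdef]
        rw [arg_quot hξ hσ (by linarith : σ < σ + γ), hAdef]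
      have h1 : Real.arctan (ξ / (σ + 1)) ≤ Real.arctan (ξ / (σ + γ)) :=
        hmono _ _ (div_le_div_of_nonneg_left hξ.le (by positivity) (by linarith))
      have hc : σ + ((0 : ℕ) : ℝ) + 1 = σ + 1 := by push_cast; ring
      constructor
      · rw [harg, hc]; linarith
      · rw [harg, hddef]; linarith
    | succ n ih =>
      have hc1 : σ + γ + ((n + 1 : ℕ) : ℝ) = σ + γ + n + 1 := by push_cast; ring
      have hc2 : σ + ((n + 1 : ℕ) : ℝ) = σ + n + 1 := by push_cast; ring
      have hc3 : σ + ((n + 1 : ℕ) : ℝ) + 1 = σ + n + 2 := by push_cast; ring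
      set w : ℂ := z (σ + γ + n + 1) / z (σ + n + 1) with hwdef
      clear_value w
      have hPsucc : P (n + 1) = P n * w := by
        simp only [hPdef, hwdef]
        rw [← hc1, ← hc2]
        exact Finset.prod_range_succ _ _
      have hw0 : w ≠ 0 := by
        rw [hwdef]
        exact div_ne_zero (hz0 _ (by positivity)) (hz0 _ (by positivity))
      have hargw : w.arg
          = Real.arctan (ξ / (σ + γ + n + 1)) - Real.arctan (ξ / (σ + n + 1)) := by
        rw [hwdef]; simp only [hzdef]
        exact arg_quot hξ (by positivity) (by linarith)
      have hargw_le : w.arg ≤ 0 := by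
        rw [hargw]
        have := hmono (ξ / (σ + γ + n + 1)) (ξ / (σ + n + 1))
          (div_le_div_of_nonneg_left hξ.le (by positivity) (by linarith))
        linarith
      have hargw_ge : Real.arctan (ξ / (σ + n + 2)) - Real.arctan (ξ / (σ + n + 1))
          ≤ w.arg := by
        rw [hargw]
        have h1 : Real.arctan (ξ / (σ + n + 2)) ≤ Real.arctan (ξ / (σ + γ + n + 1)) :=
          hmono _ _ (div_le_div_of_nonneg_left hξ.le (by positivity) (by linarith))
        linarith
      have ht2 : 0 < Real.arctan (ξ / (σ + n + 2)) := arctan_pos' (by positivity)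
      have ht1 : 0 < Real.arctan (ξ / (σ + n + 1)) := arctan_pos' (by positivity)
      have hmem : (P n).arg + w.arg ∈ Set.Ioc (-π) π := by
        refine ⟨?_, ?_⟩
        · have h1 := ih.1; nlinarith
        · have h2 := ih.2; linarith
      have hargmul : (P (n + 1)).arg = (P n).arg + w.arg := by
        rw [hPsucc]
        exact Complex.arg_mul (hP0 n) hw0 hmem
      refine ⟨?_, ?_⟩
      · rw [hargmul, hc3]; linarith [ih.1]
      · rw [hargmul]; linarith [ih.2]
  -- the closed sector
  set K : Set ℂ := {w : ℂ | Real.tan d * w.re ≤ -w.im ∧ -w.im ≤ Real.tan A * w.re} with hKdef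
  clear_value K
  have hKclosed : IsClosed K := by
    rw [hKdef, Set.setOf_and]
    exact IsClosed.inter
      (isClosed_le (continuous_const.mul Complex.continuous_re) Complex.continuous_im.neg)
      (isClosed_le Complex.continuous_im.neg (continuous_const.mul Complex.continuous_re))
  have hmemK : ∀ w : ℂ, w ≠ 0 → -A ≤ w.arg → w.arg ≤ -d → w ∈ K := by
    intro w hw0 h1 h2
    have habs : |w.arg| < π / 2 := by
      rw [abs_lt]; constructor <;> linarith
    have hwre : 0 < w.re := (Complex.abs_arg_lt_pi_div_two_iff.1 habs).resolve_right hw0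
    have hIoo : w.arg ∈ Set.Ioo (-(π / 2)) (π / 2) :=
      ⟨(abs_lt.1 habs).1, (abs_lt.1 habs).2⟩
    have hAIoo : -A ∈ Set.Ioo (-(π / 2)) (π / 2) := ⟨by linarith, by linarith⟩
    have hdIoo : -d ∈ Set.Ioo (-(π / 2)) (π / 2) := ⟨by linarith, by linarith⟩
    have ht1 : Real.tan (-A) ≤ Real.tan w.arg :=
      Real.strictMonoOn_tan.monotoneOn hAIoo hIoo h1
    have ht2 : Real.tan w.arg ≤ Real.tan (-d) :=
      Real.strictMonoOn_tan.monotoneOn hIoo hdIoo h2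
    rw [Real.tan_neg] at ht1
    rw [Real.tan_neg] at ht2
    rw [Complex.tan_arg] at ht1 ht2
    have e1 : -(Real.tan A) * w.re ≤ w.im := by
      have := (le_div_iff₀ hwre).1 ht1; linarith
    have e2 : w.im ≤ -(Real.tan d) * w.re := by
      have := (div_le_iff₀ hwre).1 ht2; linarith
    rw [hKdef]
    simp only [Set.mem_setOf_eq]
    exact ⟨by linarith, by linarith⟩
  -- GammaSeq quotients
  set a : ℂ := z σ with hadef
  set b : ℂ := z (σ + γ) with hbdef
  clear_value a b
  have hbre : 0 < b.re := by rw [hbdef, hzre]; linarith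
  have hare : 0 < a.re := by rw [hadef, hzre]; exact hσ
  set Q : ℕ → ℂ := fun n => Complex.GammaSeq a n / Complex.GammaSeq b n with hQdef
  clear_value Q
  have hQlim : Filter.Tendsto Q Filter.atTop (nhds (Complex.Gamma a / Complex.Gamma b)) := by
    rw [hQdef]
    exact (Complex.GammaSeq_tendsto_Gamma a).div (Complex.GammaSeq_tendsto_Gamma b)
      (Complex.Gamma_ne_zero_of_re_pos hbre)
  have hQeq : ∀ n : ℕ, 1 ≤ n → Q n = (((n : ℝ) ^ (-γ) : ℝ) : ℂ) * P n := by
    intro n hn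
    have hc0 : (n : ℂ) ≠ 0 := Nat.cast_ne_zero.2 (by omega)
    have hfac : ((Nat.factorial n : ℕ) : ℂ) ≠ 0 := Nat.cast_ne_zero.2 (Nat.factorial_ne_zero n)
    have hprod_a : ∏ j ∈ Finset.range (n + 1), (a + j) = ∏ j ∈ Finset.range (n + 1), z (σ + j) := by
      refine Finset.prod_congr rfl fun j _ => ?_
      simp only [hadef, hzdef]; push_cast; ring
    have hprod_b : ∏ j ∈ Finset.range (n + 1), (b + j)
        = ∏ j ∈ Finset.range (n + 1), z (σ + γ + j) := by
      refine Finset.prod_congr rfl fun j _ => ?_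
      simp only [hbdef, hzdef]; push_cast; ring
    have hpa0 : ∏ j ∈ Finset.range (n + 1), z (σ + j) ≠ 0 :=
      Finset.prod_ne_zero_iff.2 fun j _ => hz0 _ (by positivity)
    have hpb0 : ∏ j ∈ Finset.range (n + 1), z (σ + γ + j) ≠ 0 :=
      Finset.prod_ne_zero_iff.2 fun j _ => hz0 _ (by positivity)
    have hpow : (((n : ℝ) ^ (-γ) : ℝ) : ℂ) = (n : ℂ) ^ (a - b) := by
      have h1 : a - b = ((-γ : ℝ) : ℂ) := by simp only [hadef, hbdef, hzdef]; push_cast; ring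
      rw [h1, Complex.ofReal_cpow (Nat.cast_nonneg n)]
      norm_cast
    have hpow0a : (n : ℂ) ^ a ≠ 0 := by
      intro h
      rw [Complex.cpow_eq_zero_iff] at h
      exact hc0 h.1
    have hpow0b : (n : ℂ) ^ b ≠ 0 := by
      intro h
      rw [Complex.cpow_eq_zero_iff] at h
      exact hc0 h.1
    have hPsplit : P n = (∏ j ∈ Finset.range (n + 1), z (σ + γ + j))
        / ∏ j ∈ Finset.range (n + 1), z (σ + j) := by
      simp only [hPdef]; exact Finset.prod_div_distrib _ _
    rw [hQdef]
    show Complex.GammaSeq a n / Complex.GammaSeq b n = _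
    rw [Complex.GammaSeq, Complex.GammaSeq, hprod_a, hprod_b, hpow,
      Complex.cpow_sub _ _ hc0, hPsplit]
    field_simp
  have hQK : ∀ n : ℕ, 1 ≤ n → Q n ∈ K := by
    intro n hn
    have hr : (0 : ℝ) < (n : ℝ) ^ (-γ) := Real.rpow_pos_of_pos (by positivity) _
    have hQarg : (Q n).arg = (P n).arg := by
      rw [hQeq n hn]; exact Complex.arg_real_mul _ hr
    have hQ0 : Q n ≠ 0 := by
      rw [hQeq n hn]
      exact mul_ne_zero (Complex.ofReal_ne_zero.2 hr.ne') (hP0 n)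
    have hb1 := (main n).1
    have hb2 := (main n).2
    have ht : 0 < Real.arctan (ξ / (σ + n + 1)) := arctan_pos' (by positivity)
    refine hmemK _ hQ0 ?_ ?_
    · rw [hQarg]; linarith
    · rw [hQarg]; exact hb2
  have hLK : Complex.Gamma a / Complex.Gamma b ∈ K :=
    hKclosed.mem_of_tendsto hQlim (Filter.eventually_atTop.2 ⟨1, hQK⟩)
  have hL0 : Complex.Gamma a / Complex.Gamma b ≠ 0 :=
    div_ne_zero (Complex.Gamma_ne_zero_of_re_pos hare) (Complex.Gamma_ne_zero_of_re_pos hbre)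
  set L := Complex.Gamma a / Complex.Gamma b with hLdef
  clear_value L
  have htd : 0 < Real.tan d := Real.tan_pos_of_pos_of_lt_pi_div_two hd_pos (by linarith)
  have htdA : Real.tan d < Real.tan A :=
    Real.strictMonoOn_tan ⟨by linarith, by linarith⟩ ⟨by linarith, by linarith⟩ hdA
  rw [hKdef] at hLK
  simp only [Set.mem_setOf_eq] at hLK
  obtain ⟨h1, h2⟩ := hLK
  have hre_nonneg : 0 ≤ L.re := by
    by_contra h
    push_neg at h
    have := mul_lt_mul_of_neg_right htdA h
    linarith
  have hre_pos : 0 < L.re := by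
    rcases hre_nonneg.lt_or_eq with h | h
    · exact h
    · exfalso
      apply hL0
      have him : L.im = 0 := by nlinarith
      apply Complex.ext
      · rw [← h]; rfl
      · rw [him]; rfl
  have him_neg : L.im < 0 := by nlinarith [mul_pos htd hre_pos]
  have hgoal : (Complex.Gamma ((σ : ℂ) + (ξ : ℂ) * Complex.I) /
      Complex.Gamma (((σ + γ : ℝ) : ℂ) + (ξ : ℂ) * Complex.I)) = L := by
    simp only [hLdef, hadef, hbdef, hzdef]
  rw [hgoal]
  exact ⟨hre_pos, him_neg⟩

/-- For `0 < γ < 1`, `σ > 0` and `ξ > 0`, the principal argument of the Beta function value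
`B(σ+iξ, γ) = Γ(σ+iξ)·Γ(γ)/Γ(σ+γ+iξ)` lies strictly between `−π/2` and `0`. -/
theorem arg_Beta_mem_Ioo
    (γ σ ξ : ℝ) (hγ : 0 < γ) (hγ' : γ < 1) (hσ : 0 < σ) (hξ : 0 < ξ) :
    -(Real.pi / 2) < Complex.arg (Complex.Gamma ((σ : ℂ) + Complex.I * (ξ : ℂ)) *
        Complex.Gamma (γ : ℂ) / Complex.Gamma ((σ : ℂ) + (γ : ℂ) + Complex.I * (ξ : ℂ))) ∧
      Complex.arg (Complex.Gamma ((σ : ℂ) + Complex.I * (ξ : ℂ)) * Complex.Gamma (γ : ℂ) /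
        Complex.Gamma ((σ : ℂ) + (γ : ℂ) + Complex.I * (ξ : ℂ))) < 0 := by
  obtain ⟨hre, him⟩ := re_pos_im_neg_quot γ σ ξ hγ hγ' hσ hξ
  set L := Complex.Gamma ((σ : ℂ) + (ξ : ℂ) * Complex.I) /
    Complex.Gamma (((σ + γ : ℝ) : ℂ) + (ξ : ℂ) * Complex.I) with hLdef
  have hg : (0 : ℝ) < Real.Gamma γ := Real.Gamma_pos_of_pos hγ
  have hBeq : Complex.Gamma ((σ : ℂ) + Complex.I * (ξ : ℂ)) * Complex.Gamma (γ : ℂ) /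
      Complex.Gamma ((σ : ℂ) + (γ : ℂ) + Complex.I * (ξ : ℂ))
      = ((Real.Gamma γ : ℝ) : ℂ) * L := by
    rw [hLdef]
    rw [show ((σ : ℂ) + Complex.I * (ξ : ℂ)) = ((σ : ℂ) + (ξ : ℂ) * Complex.I) by ring,
      show ((σ : ℂ) + (γ : ℂ) + Complex.I * (ξ : ℂ))
        = (((σ + γ : ℝ) : ℂ) + (ξ : ℂ) * Complex.I) by push_cast; ring,
      Complex.Gamma_ofReal]
    ring
  rw [hBeq]
  have hre' : 0 < (((Real.Gamma γ : ℝ) : ℂ) * L).re := by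
    rw [Complex.re_ofReal_mul]; positivity
  have him' : (((Real.Gamma γ : ℝ) : ℂ) * L).im < 0 := by
    rw [Complex.im_ofReal_mul]
    exact mul_neg_of_pos_of_neg hg him
  constructor
  · exact (abs_lt.1 (Complex.abs_arg_lt_pi_div_two_iff.2 (Or.inl hre'))).1
  · exact Complex.arg_neg_iff.2 him'
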